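/- Let n ≥ 3 with 6 | n, let m ≥ 1, and let p : ℤ/mnℤ → ℤ/nℤ be reduction modulo n. Define p* : ℤ^{ℤ/nℤ} → ℤ^{ℤ/mnℤ} by (p* a)_j = a_{p(j)}. Then: (i) p* ∘ (1 − A_n^t) = (1 − A_{mn}^t) ∘ p*, so p* maps Im(1 − A_n^t) into Im(1 − A_{mn}^t) and ker(1 − A_n^t) into ker(1 − A_{mn}^t); (ii) for every i ∈ ℤ/nℤ, p*(δ_i) − m·δ_{i'} lies in Im(1 − A_{mn}^t), where i' ∈ ℤ/mnℤ is any lift of i (so on cokernels p* induces multiplication by m under the identification of classes); (iii) for a ∈ ker(1 − A_n^t), (p* a)_0 = a_0 and (p* a)_1 = a_1. -/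
import Mathlib


/-- The vertex adjacency matrix of the dihedral graph `D_N`:
`A_N(i,j) = 1` if `j = i + 1` or `j = i - 1` (mod `N`), and `0` otherwise. -/
noncomputable def dihedralAdj (N : ℕ) : Matrix (ZMod N) (ZMod N) ℤ :=
  Matrix.of fun i j => if j = i + 1 ∨ j = i - 1 then 1 else 0

/-- The endomorphism `1 - A_N^t` of `ℤ^{ℤ/Nℤ}`. -/
noncomputable def dihedralD (N : ℕ) [NeZero N] : (ZMod N → ℤ) →ₗ[ℤ] (ZMod N → ℤ) :=
  Matrix.mulVecLin (1 - (dihedralAdj N).transpose)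


lemma dihedralD_apply {N : ℕ} [NeZero N] (h2 : (2 : ZMod N) ≠ 0) (a : ZMod N → ℤ)
    (j : ZMod N) : dihedralD N a j = a j - a (j - 1) - a (j + 1) := by
  have hne : j - 1 ≠ j + 1 := by
    intro h
    apply h2
    have : (j + 1) - (j - 1) = 2 := by ring
    rw [← h] at this
    simpa using this.symm
  simp only [dihedralD, Matrix.mulVecLin_apply, Matrix.mulVec, Matrix.sub_apply,
    Matrix.one_apply, Matrix.transpose_apply, dihedralAdj, Matrix.of_apply, dotProduct,
    sub_mul, ite_mul, one_mul, zero_mul]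
  rw [Finset.sum_sub_distrib]
  have h1 : ∑ k : ZMod N, (if j = k then a k else 0) = a j := by
    simp
  have key : ∀ k : ZMod N, (if j = k + 1 ∨ j = k - 1 then a k else 0)
      = (if k = j - 1 then a k else 0) + (if k = j + 1 then a k else 0) := by
    intro k
    by_cases hk1 : k = j - 1 <;> by_cases hk2 : k = j + 1
    · exact absurd (hk1 ▸ hk2) hne
    · rw [if_pos (Or.inl (by rw [hk1]; ring)), if_pos hk1, if_neg hk2, add_zero]
    · rw [if_pos (Or.inr (by rw [hk2]; ring)), if_neg hk1, if_pos hk2, zero_add]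
    · have : ¬ (j = k + 1 ∨ j = k - 1) := by
        rintro (h | h)
        · exact hk1 (by rw [h]; ring)
        · exact hk2 (by rw [h]; ring)
      simp [this, hk1, hk2]
  rw [h1, Finset.sum_congr rfl fun k _ => key k, Finset.sum_add_distrib]
  simp
  ring

lemma dihedralD_single {N : ℕ} [NeZero N] (h2 : (2 : ZMod N) ≠ 0) (i : ZMod N) :
    dihedralD N (Pi.single i (1 : ℤ)) =
      Pi.single i 1 - Pi.single (i - 1) 1 - Pi.single (i + 1) 1 := by
  funext j
  rw [dihedralD_apply h2]
  simp only [Pi.sub_apply, Pi.single_apply]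
  have e1 : (j - 1 = i) = (j = i + 1) := by
    apply propext; constructor <;> intro h <;> [rw [← h]; rw [h]] <;> ring
  have e2 : (j + 1 = i) = (j = i - 1) := by
    apply propext; constructor <;> intro h <;> [rw [← h]; rw [h]] <;> ring
  simp only [e1, e2]
  ring

lemma single_shift6 {N : ℕ} [NeZero N] (h2 : (2 : ZMod N) ≠ 0) (c : ZMod N) :
    Pi.single (c + 6) (1 : ℤ) - Pi.single c 1 ∈ LinearMap.range (dihedralD N) := by
  refine ⟨Pi.single (c+1) 1 + Pi.single (c+2) 1 - Pi.single (c+4) 1 - Pi.single (c+5) 1, ?_⟩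
  rw [map_sub, map_sub, map_add, dihedralD_single h2, dihedralD_single h2,
    dihedralD_single h2, dihedralD_single h2,
    show c + 1 - 1 = c by ring, show c + 1 + 1 = c + 2 by ring,
    show c + 2 - 1 = c + 1 by ring, show c + 2 + 1 = c + 3 by ring,
    show c + 4 - 1 = c + 3 by ring, show c + 4 + 1 = c + 5 by ring,
    show c + 5 - 1 = c + 4 by ring, show c + 5 + 1 = c + 6 by ring]
  abel

lemma single_shift_mul6 {N : ℕ} [NeZero N] (h2 : (2 : ZMod N) ≠ 0) (c : ZMod N) (s : ℕ) :
    Pi.single (c + ((6 * s : ℕ) : ZMod N)) (1 : ℤ) - Pi.single c 1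
      ∈ LinearMap.range (dihedralD N) := by
  induction s with
  | zero => simp
  | succ s ih =>
    have h := single_shift6 h2 (c + ((6 * s : ℕ) : ZMod N))
    have e : c + ((6 * (s+1) : ℕ) : ZMod N) = c + ((6 * s : ℕ) : ZMod N) + 6 := by
      push_cast; ring
    rw [e]
    have := Submodule.add_mem _ h ih
    rwa [sub_add_sub_cancel] at this

/-- behaviour of the map `p^*` induced by the covering of `D_n` by `D_{mn}`
(reduction `p : ℤ/mnℤ → ℤ/nℤ`), where `6 ∣ n`: it intertwines `1 - A_n^t` and
`1 - A_{mn}^t` (hence maps image into image and kernel into kernel); on the cokernel it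
induces multiplication by `m` on classes of point masses; and on the kernel it preserves
the values at `0` and `1`. -/
theorem dihedral_covering_map (n m : ℕ) (hn : 3 ≤ n) (h6 : 6 ∣ n) (hm : 1 ≤ m)
    [NeZero n] [NeZero (m * n)] (hdvd : n ∣ m * n)
    (p : ZMod (m * n) →+* ZMod n) (hp : p = ZMod.castHom hdvd (ZMod n))
    (pstar : (ZMod n → ℤ) → (ZMod (m * n) → ℤ))
    (hpstar : ∀ (a : ZMod n → ℤ) (j : ZMod (m * n)), pstar a j = a (p j)) :
    (∀ a : ZMod n → ℤ, pstar (dihedralD n a) = dihedralD (m * n) (pstar a)) ∧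
    (∀ a : ZMod n → ℤ, a ∈ LinearMap.range (dihedralD n) →
      pstar a ∈ LinearMap.range (dihedralD (m * n))) ∧
    (∀ a : ZMod n → ℤ, a ∈ LinearMap.ker (dihedralD n) →
      pstar a ∈ LinearMap.ker (dihedralD (m * n))) ∧
    (∀ (i : ZMod n) (i' : ZMod (m * n)), p i' = i →
      pstar (Pi.single i (1 : ℤ)) - (m : ℤ) • Pi.single i' (1 : ℤ)
        ∈ LinearMap.range (dihedralD (m * n))) ∧
    (∀ a : ZMod n → ℤ, a ∈ LinearMap.ker (dihedralD n) →
      pstar a 0 = a 0 ∧ pstar a 1 = a 1) := by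
  have hnpos : 0 < n := by omega
  have hmn3 : 3 ≤ m * n := le_trans hn (Nat.le_mul_of_pos_left n hm)
  have h2n : (2 : ZMod n) ≠ 0 := by
    intro h
    have : n ∣ 2 := by
      rwa [show ((2 : ZMod n)) = ((2 : ℕ) : ZMod n) by norm_cast,
        ZMod.natCast_eq_zero_iff] at h
    have := Nat.le_of_dvd (by norm_num) this
    omega
  have h2mn : (2 : ZMod (m * n)) ≠ 0 := by
    intro h
    have : m * n ∣ 2 := by
      rwa [show ((2 : ZMod (m * n))) = ((2 : ℕ) : ZMod (m * n)) by norm_cast,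
        ZMod.natCast_eq_zero_iff] at h
    have := Nat.le_of_dvd (by norm_num) this
    omega
  have key : ∀ a : ZMod n → ℤ, pstar (dihedralD n a) = dihedralD (m * n) (pstar a) := by
    intro a
    funext j
    simp only [hpstar, dihedralD_apply h2n, dihedralD_apply h2mn, map_sub, map_add, map_one]
  have hpstar0 : pstar 0 = 0 := by
    funext j; rw [hpstar]; rfl
  refine ⟨key, ?_, ?_, ?_, ?_⟩
  · rintro a ⟨b, rfl⟩
    exact ⟨pstar b, (key b).symm⟩
  · intro a ha
    rw [LinearMap.mem_ker] at ha ⊢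
    rw [← key, ha, hpstar0]
  · intro i i' hii'
    have hfiber : pstar (Pi.single i (1 : ℤ)) =
        ∑ k ∈ Finset.range m, Pi.single (i' + ((k * n : ℕ) : ZMod (m * n))) (1 : ℤ) := by
      funext j
      rw [hpstar]
      simp only [Finset.sum_apply, Pi.single_apply]
      by_cases hpj : p j = i
      · have h0 : p (j - i') = 0 := by rw [map_sub, hpj, hii', sub_self]
        have hdv : n ∣ (j - i').val := by
          rwa [hp, ZMod.castHom_apply, ← ZMod.natCast_val,
            ZMod.natCast_eq_zero_iff] at h0
        obtain ⟨k₀, hk₀⟩ := hdv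
        have hval : (j - i').val < m * n := ZMod.val_lt _
        have hk₀m : k₀ < m := by
          rw [hk₀] at hval; by_contra hc; push_neg at hc; nlinarith
        have hj : j = i' + ((k₀ * n : ℕ) : ZMod (m * n)) := by
          have h1 : (((j - i').val : ℕ) : ZMod (m * n)) = j - i' :=
            ZMod.natCast_rightInverse _
          rw [hk₀] at h1
          rw [show (k₀ * n : ℕ) = n * k₀ from Nat.mul_comm _ _, h1]; ring
        rw [if_pos hpj, Finset.sum_eq_single_of_mem k₀ (Finset.mem_range.2 hk₀m)]
        · rw [if_pos hj]
        · intro k hk hkne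
          rw [if_neg]
          intro hjk
          apply hkne
          have hcast : ((k * n : ℕ) : ZMod (m * n)) = ((k₀ * n : ℕ) : ZMod (m * n)) := by
            have := hjk.symm.trans hj
            exact add_left_cancel this
          have hkn : k * n < m * n :=
            Nat.mul_lt_mul_of_lt_of_le (Finset.mem_range.1 hk) le_rfl hnpos
          have hk₀n : k₀ * n < m * n := Nat.mul_lt_mul_of_lt_of_le hk₀m le_rfl hnpos
          have := congrArg ZMod.val hcast
          rw [ZMod.val_cast_of_lt hkn, ZMod.val_cast_of_lt hk₀n] at this
          exact Nat.eq_of_mul_eq_mul_right hnpos this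
      · rw [if_neg hpj]
        symm
        apply Finset.sum_eq_zero
        intro k _
        rw [if_neg]
        intro hjk
        apply hpj
        rw [hjk, map_add, hii', map_natCast,
          (ZMod.natCast_eq_zero_iff (k * n) n).2 ⟨k, Nat.mul_comm k n⟩, add_zero]
    have hmsum : ((m : ℤ) • Pi.single i' (1 : ℤ) : ZMod (m * n) → ℤ) =
        ∑ _k ∈ Finset.range m, Pi.single i' (1 : ℤ) := by
      rw [Finset.sum_const, Finset.card_range, natCast_zsmul]
    rw [hfiber, hmsum, ← Finset.sum_sub_distrib]
    refine Submodule.sum_mem _ fun k _ => ?_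
    obtain ⟨t, ht⟩ := h6
    have : (k * n : ℕ) = 6 * (k * t) := by rw [ht]; ring
    rw [this]
    exact single_shift_mul6 h2mn i' (k * t)
  · intro a _
    constructor
    · rw [hpstar, map_zero]
    · rw [hpstar, map_one]
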